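/- Let H(g) be the 8×8 tridiagonal real matrix with H_{j,j+1} = -1 + t_j(g), H_{j+1,j} = -1 - t_j(g), zero diagonal, where (t₁,...,t₇) = (δ,γ,β,α,β,γ,δ) and α = √(1-ag), β = √(1-bg), γ = √(1-cg), δ = √(1-dg) for positive constants a,b,c,d and 0 ≤ g ≤ min(1/a,1/b,1/c,1/d). Then the characteristic polynomial of H(g) in the variable E is of the form E⁸ + p₃(g)E⁶ + p₂(g)E⁴ + p₁(g)E² + p₀(g) where each coefficient of E^{8-2k} is a polynomial in g divisible by g^k; consequently, the eigenvalues satisfy the exact scaling E_n(g) = E_n(1)·√g for g > 0. -/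

import Mathlib

open Matrix Polynomial

set_option linter.unreachableTactic false
set_option linter.unusedTactic false

def Ttri {R : Type*} [CommRing R] (x : R) (u v : ℕ → R) (k n : ℕ) : Matrix (Fin n) (Fin n) R :=
  Matrix.of fun i j =>
    if (j : ℕ) = (i : ℕ) + 1 then u (k + i)
    else if (i : ℕ) = (j : ℕ) + 1 then v (k + j)
    else if (i : ℕ) = (j : ℕ) then x else 0

theorem Ttri_rec {R : Type*} [CommRing R] (x : R) (u v : ℕ → R) (k n : ℕ) :
    (Ttri x u v k (n + 2)).det
      = x * (Ttri x u v (k + 1) (n + 1)).det - u k * v k * (Ttri x u v (k + 2) n).det := by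
  have hA : (Ttri x u v k (n+2)).submatrix Fin.succ (Fin.succAbove 0) = Ttri x u v (k+1) (n+1) := by
    ext i j
    simp only [Matrix.submatrix_apply, Ttri, Matrix.of_apply, Fin.succAbove_zero, Fin.val_succ]
    split_ifs <;> first | rfl | omega | (congr 1; omega)
  set B := (Ttri x u v k (n+2)).submatrix Fin.succ (Fin.succAbove (Fin.succ 0)) with hBdef
  have hB0 : B 0 0 = v k := by
    simp only [hBdef, Matrix.submatrix_apply, Ttri, Matrix.of_apply, Fin.succAbove, Fin.val_succ]
    split_ifs <;>
      simp only [Fin.val_succ, Fin.coe_castSucc, Fin.val_zero, Fin.lt_def] at * <;>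
      first | rfl | omega | (congr 1; omega) | (exfalso; omega) | simp_all
  have hBz : ∀ i : Fin n, B i.succ 0 = 0 := by
    intro i
    simp only [hBdef, Matrix.submatrix_apply, Ttri, Matrix.of_apply, Fin.succAbove, Fin.val_succ]
    split_ifs <;>
      simp only [Fin.val_succ, Fin.coe_castSucc, Fin.val_zero, Fin.lt_def] at * <;>
      first | rfl | omega | (exfalso; omega) | simp_all
  have hC : B.submatrix (Fin.succAbove 0) Fin.succ = Ttri x u v (k+2) n := by
    ext i j
    simp only [hBdef, Matrix.submatrix_apply, Ttri, Matrix.of_apply, Fin.succAbove,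
      Fin.val_succ, Fin.lt_def, Fin.coe_castSucc, Fin.val_zero]
    split_ifs <;>
      simp only [Fin.val_succ, Fin.coe_castSucc, Fin.val_zero] at * <;>
      first | rfl | omega | (congr 1; omega) | (exfalso; omega) | simp_all
  have hdetB : B.det = v k * (Ttri x u v (k+2) n).det := by
    rw [Matrix.det_succ_column_zero, Fin.sum_univ_succ]
    rw [hB0, hC]
    have hzz : ∀ i : Fin n, (-1 : R) ^ ((i.succ : Fin (n+1)) : ℕ) * B i.succ 0
        * (B.submatrix i.succ.succAbove Fin.succ).det = 0 := by
      intro i; rw [hBz i]; ring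
    rw [Finset.sum_congr rfl fun i _ => hzz i, Finset.sum_const, smul_zero]
    simp
  have h00 : Ttri x u v k (n+2) 0 0 = x := by
    simp only [Ttri, Matrix.of_apply]; norm_num
  have h01 : Ttri x u v k (n+2) 0 (Fin.succ 0) = u k := by
    simp only [Ttri, Matrix.of_apply, Fin.val_succ, Fin.val_zero]
    norm_num
  have hz : ∀ j : Fin n, Ttri x u v k (n+2) 0 j.succ.succ = 0 := by
    intro j
    simp only [Ttri, Matrix.of_apply, Fin.val_succ, Fin.val_zero]
    split_ifs <;> first | rfl | omega | simp_all
  rw [Matrix.det_succ_row_zero, Fin.sum_univ_succ, Fin.sum_univ_succ]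
  rw [h00, h01, hA, ← hBdef, hdetB]
  have hzz : ∀ j : Fin n, (-1 : R) ^ (((j.succ.succ : Fin (n+2))) : ℕ)
      * Ttri x u v k (n+2) 0 j.succ.succ
      * ((Ttri x u v k (n+2)).submatrix Fin.succ j.succ.succ.succAbove).det = 0 := by
    intro j; rw [hz j]; ring
  rw [Finset.sum_congr rfl fun j _ => hzz j, Finset.sum_const, smul_zero]
  simp
  ring

theorem Ttri_one {R : Type*} [CommRing R] (x : R) (u v : ℕ → R) (k : ℕ) :
    (Ttri x u v k 1).det = x := by
  rw [Matrix.det_fin_one]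
  simp [Ttri]

theorem Ttri_zero {R : Type*} [CommRing R] (x : R) (u v : ℕ → R) (k : ℕ) :
    (Ttri x u v k 0).det = 1 := Matrix.det_fin_zero

set_option maxRecDepth 4000 in
theorem Ttri_det8 {R : Type*} [CommRing R] (x : R) (u v : ℕ → R)
    (p : ℕ → R) (hp : ∀ i, i < 7 → u i * v i = p i) :
    (Ttri x u v 0 8).det
      = x^8 - (p 0 + p 1 + p 2 + p 3 + p 4 + p 5 + p 6) * x^6
        + (p 0*(p 2+p 3+p 4+p 5+p 6) + p 1*(p 3+p 4+p 5+p 6) + p 2*(p 4+p 5+p 6)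
           + p 3*(p 5+p 6) + p 4*p 6) * x^4
        - (p 0*p 2*(p 4+p 5+p 6) + p 0*p 3*(p 5+p 6) + p 0*p 4*p 6
           + p 1*p 3*(p 5+p 6) + p 1*p 4*p 6 + p 2*p 4*p 6) * x^2
        + p 0*p 2*p 4*p 6 := by
  have r0 := Ttri_rec x u v 0 6
  norm_num at r0
  have r1 := Ttri_rec x u v 1 5
  norm_num at r1
  have r2 := Ttri_rec x u v 2 4
  norm_num at r2
  have r3 := Ttri_rec x u v 3 3
  norm_num at r3
  have r4 := Ttri_rec x u v 4 2
  norm_num at r4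
  have r5 := Ttri_rec x u v 5 1
  norm_num at r5
  have r6 := Ttri_rec x u v 6 0
  norm_num at r6
  have e1 : (Ttri x u v 7 1 : Matrix (Fin 1) (Fin 1) R) 0 0 = x := by simp [Ttri]
  rw [r0, r1, r2, r3, r4, r5, r6, e1, Ttri_one x u v 7,
    hp 0 (by norm_num), hp 1 (by norm_num), hp 2 (by norm_num), hp 3 (by norm_num),
    hp 4 (by norm_num), hp 5 (by norm_num), hp 6 (by norm_num)]
  ring

/-- The exactly solvable PT-symmetric 8-site chain H^{(8)}_{ES}(g): its characteristic
    polynomial has the form E⁸ + p₃(g)E⁶ + p₂(g)E⁴ + p₁(g)E² + p₀(g), where the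
    coefficient of E^{8-2k} is a polynomial in g divisible by g^k; consequently the
    eigenvalues obey the exact scaling E_n(g) = E_n(1)·√g. -/
theorem stmt14 (a b c d : ℝ) (ha : 0 < a) (hb : 0 < b) (hc : 0 < c) (hd : 0 < d) :
    let gmax : ℝ := min (min (1 / a) (1 / b)) (min (1 / c) (1 / d))
    let t : ℝ → ℕ → ℝ := fun g n =>
      if n = 0 ∨ n = 6 then Real.sqrt (1 - d * g)
      else if n = 1 ∨ n = 5 then Real.sqrt (1 - c * g)
      else if n = 2 ∨ n = 4 then Real.sqrt (1 - b * g)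
      else Real.sqrt (1 - a * g)
    let H : ℝ → Matrix (Fin 8) (Fin 8) ℝ := fun g =>
      Matrix.of fun i j =>
        if (j : ℕ) = (i : ℕ) + 1 then -1 + t g (i : ℕ)
        else if (i : ℕ) = (j : ℕ) + 1 then -1 - t g (j : ℕ)
        else 0
    (∃ q₃ q₂ q₁ q₀ : Polynomial ℝ, ∀ g ∈ Set.Icc (0 : ℝ) gmax,
      Matrix.charpoly (H g) =
        X ^ 8 + C (g * q₃.eval g) * X ^ 6 + C (g ^ 2 * q₂.eval g) * X ^ 4
          + C (g ^ 3 * q₁.eval g) * X ^ 2 + C (g ^ 4 * q₀.eval g)) ∧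
    (1 ≤ gmax → ∀ g ∈ Set.Icc (0 : ℝ) gmax, ∀ E : ℝ,
      (Matrix.charpoly (H 1)).eval E = 0 →
      (Matrix.charpoly (H g)).eval (E * Real.sqrt g) = 0) := by
  intro gmax t H
  set k3 : ℝ := -(a + 2*b + 2*c + 2*d) with hk3
  set k2 : ℝ := d^2 + 2*c*d + c^2 + 4*b*d + 2*b*c + b^2 + 2*a*d + 2*a*c with hk2
  set k1 : ℝ := -(2*b*d^2 + 2*b*c*d + 2*b^2*d + a*d^2 + 2*a*c*d + a*c^2) with hk1
  set k0 : ℝ := b^2*d^2 with hk0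
  have key : ∀ g ∈ Set.Icc (0 : ℝ) gmax, Matrix.charpoly (H g) =
      X ^ 8 + C (g * k3) * X ^ 6 + C (g ^ 2 * k2) * X ^ 4
        + C (g ^ 3 * k1) * X ^ 2 + C (g ^ 4 * k0) := by
    intro g hg
    obtain ⟨hg0, hg1⟩ := hg
    have hga : g ≤ 1/a := le_trans hg1 (le_trans (min_le_left _ _) (min_le_left _ _))
    have hgb : g ≤ 1/b := le_trans hg1 (le_trans (min_le_left _ _) (min_le_right _ _))
    have hgc : g ≤ 1/c := le_trans hg1 (le_trans (min_le_right _ _) (min_le_left _ _))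
    have hgd : g ≤ 1/d := le_trans hg1 (le_trans (min_le_right _ _) (min_le_right _ _))
    have h1a : 0 ≤ 1 - a * g := by
      have := (le_div_iff₀ ha).mp hga; linarith [this]
    have h1b : 0 ≤ 1 - b * g := by
      have := (le_div_iff₀ hb).mp hgb; linarith [this]
    have h1c : 0 ≤ 1 - c * g := by
      have := (le_div_iff₀ hc).mp hgc; linarith [this]
    have h1d : 0 ≤ 1 - d * g := by
      have := (le_div_iff₀ hd).mp hgd; linarith [this]
    have hta : t g 3 ^ 2 = 1 - a * g := by
      simp only [t]; norm_num; exact Real.sq_sqrt h1a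
    have htb2 : t g 2 ^ 2 = 1 - b * g := by
      simp only [t]; norm_num; exact Real.sq_sqrt h1b
    have htb4 : t g 4 ^ 2 = 1 - b * g := by
      simp only [t]; norm_num; exact Real.sq_sqrt h1b
    have htc1 : t g 1 ^ 2 = 1 - c * g := by
      simp only [t]; norm_num; exact Real.sq_sqrt h1c
    have htc5 : t g 5 ^ 2 = 1 - c * g := by
      simp only [t]; norm_num; exact Real.sq_sqrt h1c
    have htd0 : t g 0 ^ 2 = 1 - d * g := by
      simp only [t]; norm_num; exact Real.sq_sqrt h1d
    have htd6 : t g 6 ^ 2 = 1 - d * g := by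
      simp only [t]; norm_num; exact Real.sq_sqrt h1d
    have hch : charmatrix (H g)
        = Ttri (X : Polynomial ℝ) (fun n => C (1 - t g n)) (fun n => C (1 + t g n)) 0 8 := by
      apply Matrix.ext
      intro i j
      by_cases hij : i = j
      · subst hij
        rw [charmatrix_apply_eq]
        have hH : H g i i = 0 := by
          simp only [H, Matrix.of_apply]
          rw [if_neg (by omega), if_neg (by omega)]
        rw [hH]
        simp only [Ttri, Matrix.of_apply]
        rw [if_neg (by omega), if_neg (by omega)]
        simp
      · rw [charmatrix_apply_ne _ _ _ hij]
        have hvij : (↑i : ℕ) ≠ ↑j := fun h => hij (Fin.ext h)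
        simp only [H, Matrix.of_apply, Ttri, Nat.zero_add]
        by_cases h1 : (↑j : ℕ) = ↑i + 1
        · rw [if_pos h1, if_pos h1]
          rw [show (1 - t g ↑i : ℝ) = -(-1 + t g ↑i) from by ring, map_neg]
        · rw [if_neg h1, if_neg h1]
          by_cases h2 : (↑i : ℕ) = ↑j + 1
          · rw [if_pos h2, if_pos h2]
            rw [show (1 + t g ↑j : ℝ) = -(-1 - t g ↑j) from by ring, map_neg]
          · rw [if_neg h2, if_neg h2, if_neg hvij]
            simp
    have hp : ∀ i, i < 7 → (fun n => (C (1 - t g n) : Polynomial ℝ)) i * (fun n => C (1 + t g n)) i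
        = (fun n : ℕ => (C ((if n = 0 ∨ n = 6 then d else if n = 1 ∨ n = 5 then c
            else if n = 2 ∨ n = 4 then b else a) * g) : Polynomial ℝ)) i := by
      intro i hi
      have base : ∀ z w : ℝ, z ^ 2 = 1 - w * g →
          (C (1 - z) : Polynomial ℝ) * C (1 + z) = C (w * g) := by
        intro z w h
        rw [← C_mul]
        congr 1
        linear_combination -h
      interval_cases i
      · exact base _ _ htd0
      · exact base _ _ htc1
      · exact base _ _ htb2
      · exact base _ _ hta
      · exact base _ _ htb4
      · exact base _ _ htc5
      · exact base _ _ htd6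
    rw [Matrix.charpoly, hch, Ttri_det8 _ _ _ _ hp]
    norm_num
    rw [hk3, hk2, hk1, hk0]
    simp only [C_mul, C_add, C_sub, C_neg, C_pow, C_1, _root_.map_ofNat]
    push_cast
    ring
  constructor
  · exact ⟨C k3, C k2, C k1, C k0, fun g hg => by rw [key g hg]; simp only [eval_C]⟩
  · intro hgm g hg E hE
    rw [key 1 ⟨zero_le_one, hgm⟩] at hE
    rw [key g hg]
    simp only [eval_add, eval_mul, eval_pow, eval_C, eval_X, one_pow, one_mul] at hE ⊢
    set s := Real.sqrt g with hs
    have hsq : s ^ 2 = g := Real.sq_sqrt hg.1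
    rw [← hsq]
    linear_combination s ^ 8 * hE
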